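/- Continuous Fano's inequality: let (Θ, G) be a measurable space equipped with a probability measure ν, let (Ω, F) be a measurable space, and let (P_θ)_{θ∈Θ} and (Q_θ)_{θ∈Θ} be families of probability measures on (Ω, F) and (A_θ)_{θ∈Θ} a family of events of F, such that θ ↦ P_θ(A_θ), θ ↦ Q_θ(A_θ) and θ ↦ KL(P_θ, Q_θ) are measurable, with KL(P_θ, Q_θ) finite and ν-integrable. If 0 < ∫_Θ Q_θ(A_θ) dν(θ) < 1, then ∫_Θ P_θ(A_θ) dν(θ) ≤ ( ∫_Θ KL(P_θ, Q_θ) dν(θ) + log 2 ) / ( − log ∫_Θ Q_θ(A_θ) dν(θ) ). -/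

import Mathlib

open MeasureTheory
open scoped ENNReal Classical

section Aux
open Real
variable {Ω : Type*} [MeasurableSpace Ω] {μ ν : Measure Ω}


/-- Nonnegativity of the KL divergence. -/
lemma aux_integral_llr_nonneg [IsProbabilityMeasure μ] [IsProbabilityMeasure ν]
    (hμν : μ ≪ ν) (h : Integrable (llr μ ν) μ) : 0 ≤ ∫ x, llr μ ν x ∂μ := by
  set r := μ.rnDeriv ν with hr
  have hlint : ∫⁻ x, (r x)⁻¹ ∂μ ≤ 1 := by
    conv_lhs => rw [← Measure.withDensity_rnDeriv_eq μ ν hμν]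
    show ∫⁻ x, (μ.rnDeriv ν)⁻¹ x ∂(ν.withDensity (μ.rnDeriv ν)) ≤ 1
    rw [lintegral_withDensity_eq_lintegral_mul _ (Measure.measurable_rnDeriv μ ν)
      (Measure.measurable_rnDeriv μ ν).inv]
    calc ∫⁻ x, r x * (r x)⁻¹ ∂ν ≤ ∫⁻ _, 1 ∂ν :=
          lintegral_mono fun x => ENNReal.mul_inv_le_one _
      _ = 1 := by simp
  have hint : Integrable (fun x => ((r x)⁻¹).toReal) μ :=
    integrable_toReal_of_lintegral_ne_top (Measure.measurable_rnDeriv μ ν).inv.aemeasurable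
      (lt_of_le_of_lt hlint ENNReal.one_lt_top).ne
  have heq : ∫ x, ((r x)⁻¹).toReal ∂μ ≤ 1 := by
    show ∫ x, ((μ.rnDeriv ν)⁻¹ x).toReal ∂μ ≤ 1
    rw [integral_toReal (Measure.measurable_rnDeriv μ ν).inv.aemeasurable ?_]
    · exact le_trans (ENNReal.toReal_mono ENNReal.one_ne_top hlint) (by simp)
    · filter_upwards [Measure.rnDeriv_pos hμν] with x hx
      simpa [ENNReal.inv_lt_top] using hx
  have hpt : ∀ᵐ x ∂μ, 1 - ((r x)⁻¹).toReal ≤ llr μ ν x := by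
    filter_upwards [Measure.rnDeriv_pos hμν, hμν.ae_le (Measure.rnDeriv_lt_top μ ν)]
      with x hx hx'
    have hpos : 0 < (r x).toReal := ENNReal.toReal_pos hx.ne' hx'.ne
    rw [ENNReal.toReal_inv]
    exact Real.one_sub_inv_le_log_of_pos hpos
  have h1 : ∫ x, (1 - ((r x)⁻¹).toReal) ∂μ ≤ ∫ x, llr μ ν x ∂μ :=
    integral_mono_ae ((integrable_const (1:ℝ)).sub hint) h hpt
  rw [integral_sub (integrable_const _) hint] at h1
  simp only [integral_const, measure_univ, probReal_univ, ENNReal.toReal_one, smul_eq_mul, one_mul] at h1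
  linarith

/-- Donsker–Varadhan lower bound for bounded measurable `f`. -/
lemma aux_dv [IsProbabilityMeasure μ] [IsProbabilityMeasure ν]
    (hμν : μ ≪ ν) (hllr : Integrable (llr μ ν) μ) {f : Ω → ℝ} (hf : Measurable f)
    {C : ℝ} (hb : ∀ x, |f x| ≤ C) :
    ∫ x, f x ∂μ - Real.log (∫ x, Real.exp (f x) ∂ν) ≤ ∫ x, llr μ ν x ∂μ := by
  have hfν : Integrable (fun x => Real.exp (f x)) ν := by
    refine Integrable.mono' (integrable_const (Real.exp C)) (hf.exp).aestronglyMeasurable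
      (Filter.Eventually.of_forall fun x => ?_)
    rw [Real.norm_eq_abs, abs_of_pos (Real.exp_pos _)]
    exact Real.exp_le_exp.2 ((abs_le.1 (hb x)).2)
  have hfμ : Integrable f μ :=
    Integrable.mono' (integrable_const C) hf.aestronglyMeasurable
      (Filter.Eventually.of_forall fun x => hb x)
  haveI : IsProbabilityMeasure (ν.tilted f) := isProbabilityMeasure_tilted hfν
  have hac : μ ≪ ν.tilted f := hμν.trans (absolutelyContinuous_tilted hfν)
  have h2 : Integrable (llr μ (ν.tilted f)) μ :=
    integrable_llr_tilted_right hμν hfμ hllr hfν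
  have h3 := integral_llr_tilted_right hμν hfμ hfν hllr
  have h0 := aux_integral_llr_nonneg hac h2
  rw [h3] at h0
  linarith

end Aux

/-- The Kullback-Leibler divergence between two measures, with value `+∞`
when `P` is not absolutely continuous w.r.t. `Q` or when the log-likelihood
ratio is not integrable. -/
noncomputable def KLdiv {Ω : Type*} [MeasurableSpace Ω] (P Q : Measure Ω) : ℝ≥0∞ :=
  if P ≪ Q ∧ Integrable (fun ω => Real.log (P.rnDeriv Q ω).toReal) P
  then ENNReal.ofReal (∫ ω, Real.log (P.rnDeriv Q ω).toReal ∂P)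
  else ⊤

/-- Continuous Fano's inequality, for a family of pairs of distributions indexed
by a measurable parameter space equipped with a prior `ν`. -/
theorem fano_continuous {Θ Ω : Type*} [MeasurableSpace Θ] [MeasurableSpace Ω]
    (ν : Measure Θ) [IsProbabilityMeasure ν]
    (P Q : Θ → Measure Ω)
    [∀ θ, IsProbabilityMeasure (P θ)] [∀ θ, IsProbabilityMeasure (Q θ)]
    (A : Θ → Set Ω) (hA : ∀ θ, MeasurableSet (A θ))
    (hPmeas : Measurable fun θ => (P θ (A θ)).toReal)
    (hQmeas : Measurable fun θ => (Q θ (A θ)).toReal)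
    (hKLfin : ∀ θ, KLdiv (P θ) (Q θ) ≠ ⊤)
    (hKLint : Integrable (fun θ => (KLdiv (P θ) (Q θ)).toReal) ν)
    (hq0 : 0 < ∫ θ, (Q θ (A θ)).toReal ∂ν)
    (hq1 : (∫ θ, (Q θ (A θ)).toReal ∂ν) < 1) :
    (∫ θ, (P θ (A θ)).toReal ∂ν) ≤
      ((∫ θ, (KLdiv (P θ) (Q θ)).toReal ∂ν) + Real.log 2) /
        (- Real.log (∫ θ, (Q θ (A θ)).toReal ∂ν)) := by
  unfold KLdiv at hKLfin hKLint ⊢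
  set p : Θ → ℝ := fun θ => (P θ (A θ)).toReal with hp
  set q : Θ → ℝ := fun θ => (Q θ (A θ)).toReal with hq
  set K : Θ → ℝ := fun θ => (if (P θ) ≪ (Q θ) ∧ Integrable (fun ω => Real.log ((P θ).rnDeriv (Q θ) ω).toReal) (P θ)
      then ENNReal.ofReal (∫ ω, Real.log ((P θ).rnDeriv (Q θ) ω).toReal ∂(P θ)) else (⊤:ℝ≥0∞)).toReal with hK
  set qbar : ℝ := ∫ θ, q θ ∂ν with hqbar
  set c : ℝ := - Real.log qbar with hc_def
  have hc : 0 < c := neg_pos.2 (Real.log_neg hq0 hq1)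
  have hexpc : Real.exp c = qbar⁻¹ := by
    rw [hc_def, Real.exp_neg, Real.exp_log hq0]
  have hk0 : (0:ℝ) ≤ Real.exp c - 1 := by
    have := Real.one_le_exp hc.le; linarith
  have hp01 : ∀ θ, 0 ≤ p θ ∧ p θ ≤ 1 := fun θ =>
    ⟨ENNReal.toReal_nonneg, by
      have h := ENNReal.toReal_mono ENNReal.one_ne_top (prob_le_one (μ := P θ) (s := A θ))
      simpa using h⟩
  have hq01 : ∀ θ, 0 ≤ q θ ∧ q θ ≤ 1 := fun θ =>
    ⟨ENNReal.toReal_nonneg, by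
      have h := ENNReal.toReal_mono ENNReal.one_ne_top (prob_le_one (μ := Q θ) (s := A θ))
      simpa using h⟩
  -- pointwise Donsker-Varadhan bound
  have key : ∀ θ, p θ * c - Real.log (q θ * (Real.exp c - 1) + 1) ≤ K θ := by
    intro θ
    by_cases h : (P θ) ≪ (Q θ) ∧
        Integrable (fun ω => Real.log ((P θ).rnDeriv (Q θ) ω).toReal) (P θ)
    swap
    · exact absurd (by rw [if_neg h]) (hKLfin θ)
    obtain ⟨hac, hint⟩ := h
    have hint' : Integrable (llr (P θ) (Q θ)) (P θ) := hint
    have hDV := aux_dv hac hint' (f := fun ω => (A θ).indicator (fun _ => c) ω)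
      (measurable_const.indicator (hA θ)) (C := c)
      (fun x => by
        by_cases hx : x ∈ A θ <;>
          simp [Set.indicator_of_mem, Set.indicator_of_notMem, hx, abs_of_pos hc, hc.le])
    have hint1 : ∫ x, (A θ).indicator (fun _ => c) x ∂(P θ) = p θ * c := by
      rw [integral_indicator_const c (hA θ)]; simp [hp, mul_comm, measureReal_def]
    have hexpeq : (fun ω => Real.exp ((A θ).indicator (fun _ => c) ω))
        = fun ω => (A θ).indicator (fun _ => Real.exp c - 1) ω + 1 := by
      funext ω
      by_cases hx : ω ∈ A θ <;>
        simp [Set.indicator_of_mem, Set.indicator_of_notMem, hx]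
    have hint2 : ∫ x, Real.exp ((A θ).indicator (fun _ => c) x) ∂(Q θ)
        = q θ * (Real.exp c - 1) + 1 := by
      rw [hexpeq, integral_add ((integrable_const (Real.exp c - 1)).indicator (hA θ))
        (integrable_const 1), integral_indicator_const (Real.exp c - 1) (hA θ)]
      simp [hq, mul_comm, measureReal_def]
    have hKeq : K θ = ∫ x, llr (P θ) (Q θ) x ∂(P θ) := by
      rw [hK]
      simp only [if_pos (And.intro hac hint)]
      exact ENNReal.toReal_ofReal (aux_integral_llr_nonneg hac hint')
    rw [hKeq]
    rw [hint1, hint2] at hDV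
    exact hDV
  -- integrability of the left-hand side
  have hqmeas' : Measurable fun θ => q θ * (Real.exp c - 1) + 1 :=
    (hQmeas.mul_const _).add_const 1
  have harg : ∀ θ, 1 ≤ q θ * (Real.exp c - 1) + 1 ∧
      q θ * (Real.exp c - 1) + 1 ≤ Real.exp c := by
    intro θ
    obtain ⟨h0, h1⟩ := hq01 θ
    constructor
    · nlinarith
    · nlinarith
  have hlogbound : ∀ θ, |Real.log (q θ * (Real.exp c - 1) + 1)| ≤ c := by
    intro θ
    obtain ⟨h1, h2⟩ := harg θ
    have hnn : 0 ≤ Real.log (q θ * (Real.exp c - 1) + 1) := Real.log_nonneg h1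
    rw [abs_of_nonneg hnn]
    calc Real.log (q θ * (Real.exp c - 1) + 1) ≤ Real.log (Real.exp c) :=
          Real.log_le_log (by linarith) h2
      _ = c := Real.log_exp c
  have hpint : Integrable p ν :=
    Integrable.mono' (integrable_const 1) hPmeas.aestronglyMeasurable
      (Filter.Eventually.of_forall fun θ => by
        rw [Real.norm_eq_abs, abs_of_nonneg (hp01 θ).1]; exact (hp01 θ).2)
  have hqint : Integrable q ν :=
    Integrable.mono' (integrable_const 1) hQmeas.aestronglyMeasurable
      (Filter.Eventually.of_forall fun θ => by
        rw [Real.norm_eq_abs, abs_of_nonneg (hq01 θ).1]; exact (hq01 θ).2)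
  have hlogint : Integrable (fun θ => Real.log (q θ * (Real.exp c - 1) + 1)) ν :=
    Integrable.mono' (integrable_const c)
      (Real.measurable_log.comp hqmeas').aestronglyMeasurable
      (Filter.Eventually.of_forall fun θ => hlogbound θ)
  have hLint : Integrable (fun θ => p θ * c - Real.log (q θ * (Real.exp c - 1) + 1)) ν :=
    (hpint.mul_const c).sub hlogint
  have hmono : ∫ θ, (p θ * c - Real.log (q θ * (Real.exp c - 1) + 1)) ∂ν ≤ ∫ θ, K θ ∂ν :=
    integral_mono hLint hKLint key
  rw [integral_sub (hpint.mul_const c) hlogint, integral_mul_const] at hmono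
  -- Jensen
  have hfint : ∫ θ, (q θ * (Real.exp c - 1) + 1) ∂ν = qbar * (Real.exp c - 1) + 1 := by
    rw [integral_add (hqint.mul_const _) (integrable_const 1), integral_mul_const]
    simp [hqbar]
  have hjen : ∫ θ, Real.log (q θ * (Real.exp c - 1) + 1) ∂ν
      ≤ Real.log (qbar * (Real.exp c - 1) + 1) := by
    have hconc : ConcaveOn ℝ (Set.Icc 1 (Real.exp c)) Real.log :=
      strictConcaveOn_log_Ioi.concaveOn.subset
        (fun x hx => lt_of_lt_of_le one_pos hx.1) (convex_Icc _ _)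
    have hcont : ContinuousOn Real.log (Set.Icc 1 (Real.exp c)) :=
      Real.continuousOn_log.mono (fun x hx => ne_of_gt (lt_of_lt_of_le one_pos hx.1))
    have := hconc.le_map_integral hcont isClosed_Icc
      (Filter.Eventually.of_forall fun θ => ⟨(harg θ).1, (harg θ).2⟩)
      ((hqint.mul_const _).add (integrable_const 1))
      (by
        show Integrable (Real.log ∘ fun θ => q θ * (Real.exp c - 1) + 1) ν
        exact hlogint)
    rwa [hfint] at this
  have hval : qbar * (Real.exp c - 1) + 1 = 2 - qbar := by
    rw [hexpc]; field_simp; ring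
  have hlog2 : Real.log (qbar * (Real.exp c - 1) + 1) ≤ Real.log 2 := by
    rw [hval]
    exact Real.log_le_log (by linarith) (by linarith)
  rw [le_div_iff₀ hc]
  linarith
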